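/- Let f : ℝ≥0 → ℝ≥0 be a decreasing right-continuous function with lim_{s→∞} f(s) = 0. Suppose there exist τ > 1 and B > 0 such that t·f(s+t) ≤ B·f(s)^τ for all t,s > 0. Then f(s) = 0 for all s ≥ S∞, where S∞ := 2B·f(0)^{τ-1}/(1 - 2^{1-τ}). -/

import Mathlib

open Set Filter

private lemma deGiorgi_aux_pow (τ : ℝ) (k : ℕ) :
    ((2:ℝ) ^ (1 - τ)) ^ k * ((2:ℝ) ^ k) ^ τ = 2 ^ k := by
  rw [← Real.rpow_natCast ((2:ℝ) ^ (1 - τ)) k, ← Real.rpow_natCast (2:ℝ) k,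
    ← Real.rpow_mul (by norm_num), ← Real.rpow_mul (by norm_num),
    ← Real.rpow_add (by norm_num)]
  congr 1
  ring

/-- De Giorgi-type iteration lemma: a decreasing right-continuous `f : ℝ≥0 → ℝ≥0`
tending to `0` at infinity and satisfying `t·f(s+t) ≤ B·f(s)^τ` for all `s,t > 0`
(with `τ > 1`, `B > 0`) vanishes for `s ≥ S∞ = 2B f(0)^{τ-1}/(1-2^{1-τ})`. -/
theorem deGiorgi_iteration_vanishing
    (f : ℝ → ℝ) (B τ : ℝ) (hτ : 1 < τ) (hB : 0 < B)
    (hpos : ∀ s : ℝ, 0 ≤ s → 0 ≤ f s)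
    (hdec : ∀ s t : ℝ, 0 ≤ s → s ≤ t → f t ≤ f s)
    (hrc : ∀ s : ℝ, 0 ≤ s → ContinuousWithinAt f (Ici s) s)
    (hlim : Tendsto f atTop (nhds 0))
    (hiter : ∀ s t : ℝ, 0 < s → 0 < t → t * f (s + t) ≤ B * f s ^ τ) :
    ∀ s : ℝ, 2 * B * f 0 ^ (τ - 1) / (1 - 2 ^ (1 - τ)) ≤ s → f s = 0 := by
  set r : ℝ := 2 ^ (1 - τ) with hr_def
  have hr0 : 0 < r := Real.rpow_pos_of_pos (by norm_num) _
  have hr1 : r < 1 := Real.rpow_lt_one_of_one_lt_of_neg (by norm_num) (by linarith)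
  have h1r : 0 < 1 - r := by linarith
  set S : ℝ := 2 * B * f 0 ^ (τ - 1) / (1 - r) with hS_def
  have hf0 : 0 ≤ f 0 := hpos 0 le_rfl
  have hS0 : 0 ≤ S := by
    apply div_nonneg _ h1r.le
    have : 0 ≤ f 0 ^ (τ - 1) := Real.rpow_nonneg hf0 _
    positivity
  -- geometric sum bound
  have hsum : ∀ n : ℕ, ∑ i ∈ Finset.range n, r ^ i ≤ (1 - r)⁻¹ := by
    intro n
    rw [geom_sum_eq hr1.ne, div_le_iff_of_neg (by linarith : r - 1 < 0)]
    have h : (1 - r)⁻¹ * (r - 1) = -1 := by field_simp; ring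
    rw [h]
    nlinarith [pow_nonneg hr0.le n]
  -- main claim for s strictly greater than S
  have key : ∀ s : ℝ, S < s → f s = 0 := by
    intro s hs
    have hs0 : (0:ℝ) ≤ s := le_trans hS0 hs.le
    have hfs0 : 0 ≤ f s := hpos s hs0
    by_cases hf0pos : f 0 = 0
    · have := hdec 0 s le_rfl hs0
      linarith [hpos s hs0, this, hf0pos ▸ this]
    have hf0' : 0 < f 0 := lt_of_le_of_ne hf0 (Ne.symm hf0pos)
    have hA : 0 < f 0 ^ (τ - 1) := Real.rpow_pos_of_pos hf0' _
    set ε : ℝ := s - S with hε_def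
    have hε : 0 < ε := by simp [hε_def]; linarith
    set t : ℕ → ℝ := fun k => 2 * B * f 0 ^ (τ - 1) * r ^ k with ht_def
    have htpos : ∀ k, 0 < t k := by
      intro k
      have := pow_pos hr0 k
      simp only [ht_def]
      positivity
    set sk : ℕ → ℝ := fun k => ε + ∑ j ∈ Finset.range k, t j with hsk_def
    have hskpos : ∀ k, 0 < sk k := by
      intro k
      have : 0 ≤ ∑ j ∈ Finset.range k, t j :=
        Finset.sum_nonneg fun j _ => (htpos j).le
      simp only [hsk_def]
      linarith
    have hskle : ∀ k, sk k ≤ s := by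
      intro k
      have h1 : ∑ j ∈ Finset.range k, t j
          = 2 * B * f 0 ^ (τ - 1) * ∑ j ∈ Finset.range k, r ^ j := by
        rw [Finset.mul_sum]
      have h2 : ∑ j ∈ Finset.range k, t j ≤ S := by
        rw [h1, hS_def, div_eq_mul_inv]
        exact mul_le_mul_of_nonneg_left (hsum k) (by positivity)
      simp only [hsk_def]
      linarith
    -- the iteration
    have claim : ∀ k : ℕ, f (sk k) ≤ f 0 / 2 ^ k := by
      intro k
      induction k with
      | zero =>
        simpa [hsk_def] using hdec 0 ε le_rfl hε.le
      | succ k ih =>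
        have hstep : sk (k + 1) = sk k + t k := by
          simp [hsk_def, Finset.sum_range_succ]; ring
        have h2k : (0:ℝ) < 2 ^ k := by positivity
        have hfk : 0 ≤ f (sk k) := hpos _ (hskpos k).le
        have h1 : t k * f (sk k + t k) ≤ B * f (sk k) ^ τ :=
          hiter (sk k) (t k) (hskpos k) (htpos k)
        have h2 : f (sk k) ^ τ ≤ (f 0 / 2 ^ k) ^ τ :=
          Real.rpow_le_rpow hfk ih (by linarith)
        have hkey : B * (f 0 / 2 ^ k) ^ τ = t k * (f 0 / 2 ^ (k + 1)) := by
          have hrp : ((2:ℝ) ^ k) ^ τ ≠ 0 :=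
            (Real.rpow_pos_of_pos h2k τ).ne'
          have hf0τ : f 0 ^ τ = f 0 ^ (τ - 1) * f 0 := by
            have h := Real.rpow_add hf0' (τ - 1) 1
            rw [Real.rpow_one] at h
            have he : τ - 1 + 1 = τ := by ring
            rw [he] at h
            exact h
          rw [Real.div_rpow hf0 h2k.le, hf0τ, ht_def]
          have haux : r ^ k * ((2:ℝ) ^ k) ^ τ = 2 ^ k := deGiorgi_aux_pow τ k
          field_simp
          linear_combination (-2) * haux
        have h3 : t k * f (sk (k + 1)) ≤ t k * (f 0 / 2 ^ (k + 1)) := by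
          rw [hstep]
          calc t k * f (sk k + t k) ≤ B * f (sk k) ^ τ := h1
            _ ≤ B * (f 0 / 2 ^ k) ^ τ := by
                exact mul_le_mul_of_nonneg_left h2 hB.le
            _ = t k * (f 0 / 2 ^ (k + 1)) := hkey
        exact le_of_mul_le_mul_left h3 (htpos k)
    -- pass to the limit
    have hfs_le : ∀ k : ℕ, f s ≤ f 0 / 2 ^ k := by
      intro k
      exact le_trans (hdec (sk k) s (hskpos k).le (hskle k)) (claim k)
    have hlim2 : Tendsto (fun k : ℕ => f 0 / 2 ^ k) atTop (nhds 0) := by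
      have h : Tendsto (fun k : ℕ => ((2:ℝ)⁻¹) ^ k) atTop (nhds 0) :=
        tendsto_pow_atTop_nhds_zero_of_lt_one (by norm_num) (by norm_num)
      have := h.const_mul (f 0)
      simpa [div_eq_mul_inv, mul_comm, inv_pow] using this
    have : f s ≤ 0 := ge_of_tendsto hlim2 (Eventually.of_forall hfs_le)
    linarith
  -- value at S via right continuity
  have hfS : f S = 0 := by
    have h1 : Tendsto f (nhdsWithin S (Ioi S)) (nhds (f S)) :=
      (hrc S hS0).mono_left (nhdsWithin_mono _ Ioi_subset_Ici_self)
    have h2 : Tendsto f (nhdsWithin S (Ioi S)) (nhds 0) := by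
      apply Tendsto.congr' _ tendsto_const_nhds
      filter_upwards [self_mem_nhdsWithin] with x hx
      exact (key x hx).symm
    exact tendsto_nhds_unique h1 h2
  intro s hs
  have h1 : f s ≤ f S := hdec S s hS0 hs
  have h2 : 0 ≤ f s := hpos s (le_trans hS0 hs)
  linarith [hfS ▸ h1]
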